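/- Let X = [a,b] ⊂ ℝ^m, f: ℝ^m → ℝ^p continuous, and for each sub-box Y^k (k = 1,...,N) covering X, let f^k: Y^k → ℝ^p satisfy f^k(x) ≤ f(x) componentwise with componentwise gap at most ε (i.e., f_j(x) - f_j^k(x) < ε for all j, x ∈ Y^k). Define S = {x ∈ ⋃_k W_k : ∄ y ∈ ⋃_k W_k with f(y)_j < f(x)_j for all j}, where W_k is the set of weakly efficient solutions of min_{Y^k} f^k. Then every x ∈ S is an ε-weakly efficient solution of min_X f, i.e., there is no y ∈ X with f(y)_j + ε < f(x)_j for all j. -/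
import Mathlib

/-- On a compact set, every point is dominated (weakly) by a weakly efficient point. -/
lemma exists_weff {m p : ℕ} (hp : 0 < p) {Y : Set (Fin m → ℝ)} (hYc : IsCompact Y)
    (g : (Fin m → ℝ) → Fin p → ℝ) (hg : ContinuousOn g Y) {y : Fin m → ℝ} (hy : y ∈ Y) :
    ∃ w ∈ Y, (∀ j, g w j ≤ g y j) ∧ ¬∃ z ∈ Y, ∀ j, g z j < g w j := by
  set K : Set (Fin m → ℝ) := Y ∩ g ⁻¹' {v | ∀ j, v j ≤ g y j} with hKdef
  have hCcl : IsClosed {v : Fin p → ℝ | ∀ j, v j ≤ g y j} := by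
    have : {v : Fin p → ℝ | ∀ j, v j ≤ g y j} = ⋂ j, {v | v j ≤ g y j} := by
      ext v; simp
    rw [this]
    exact isClosed_iInter fun j => isClosed_le (continuous_apply j) continuous_const
  have hKcl : IsClosed K := hg.preimage_isClosed_of_isClosed hYc.isClosed hCcl
  have hKsub : K ⊆ Y := Set.inter_subset_left
  have hKc : IsCompact K := hYc.of_isClosed_subset hKcl hKsub
  have hyK : y ∈ K := ⟨hy, fun j => le_refl _⟩
  have hφ : ContinuousOn (fun z => ∑ j, g z j) K :=
    continuousOn_finset_sum _ fun j _ => (continuous_apply j).comp_continuousOn (hg.mono hKsub)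
  obtain ⟨w, hwK, hwmin⟩ := hKc.exists_isMinOn ⟨y, hyK⟩ hφ
  refine ⟨w, hKsub hwK, hwK.2, ?_⟩
  rintro ⟨z, hzY, hzdom⟩
  have hzK : z ∈ K := ⟨hzY, fun j => (hzdom j).le.trans (hwK.2 j)⟩
  have hlt : ∑ j, g z j < ∑ j, g w j := by
    apply Finset.sum_lt_sum_of_nonempty
    · exact Finset.univ_nonempty_iff.mpr ⟨⟨0, hp⟩⟩
    · exact fun j _ => hzdom j
  exact absurd (hwmin hzK) (not_le.mpr hlt)

/-- The weakly efficient solution set of the piecewise convexification problem consists of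
`ε`-weakly efficient solutions of the original problem. -/
theorem stmt10 (m p N : ℕ) (Y : Fin N → Set (Fin m → ℝ))
    (hYc : ∀ k, IsCompact (Y k)) (hYne : ∀ k, (Y k).Nonempty)
    (f : (Fin m → ℝ) → Fin p → ℝ) (hf : Continuous f)
    (fk : Fin N → (Fin m → ℝ) → Fin p → ℝ) (hfk : ∀ k, ContinuousOn (fk k) (Y k))
    (ε : ℝ) (hε : 0 < ε)
    (hle : ∀ k, ∀ x ∈ Y k, ∀ j, fk k x j ≤ f x j)
    (hgap : ∀ k, ∀ x ∈ Y k, ∀ j, f x j - fk k x j < ε)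
    (W : Fin N → Set (Fin m → ℝ))
    (hW : ∀ k, W k = {z ∈ Y k | ¬∃ y ∈ Y k, ∀ j, fk k y j < fk k z j})
    (S : Set (Fin m → ℝ))
    (hS : S = {z ∈ ⋃ k, W k | ¬∃ y ∈ ⋃ k, W k, ∀ j, f y j < f z j})
    (x : Fin m → ℝ) (hx : x ∈ S) :
    ¬∃ y ∈ ⋃ k, Y k, ∀ j, f y j + ε < f x j := by
  rw [hS] at hx
  obtain ⟨hxW, hxnd⟩ := hx
  rintro ⟨y, hyY, hydom⟩
  rcases Nat.eq_zero_or_pos p with hp | hp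
  · -- p = 0: x ∈ W k contradicts Y k nonempty
    obtain ⟨k, hxk⟩ := Set.mem_iUnion.mp hxW
    rw [hW k] at hxk
    exact hxk.2 ⟨x, hxk.1, fun j => absurd j.isLt (by omega)⟩
  · obtain ⟨k, hyk⟩ := Set.mem_iUnion.mp hyY
    obtain ⟨w, hwY, hwle, hweff⟩ := exists_weff hp (hYc k) (fk k) (hfk k) hyk
    apply hxnd
    refine ⟨w, Set.mem_iUnion.mpr ⟨k, ?_⟩, fun j => ?_⟩
    · rw [hW k]; exact ⟨hwY, fun ⟨z, hz, hzd⟩ => hweff ⟨z, hz, hzd⟩⟩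
    · have h1 : f w j < fk k w j + ε := by linarith [hgap k w hwY j]
      have h2 : fk k w j ≤ fk k y j := hwle j
      have h3 : fk k y j ≤ f y j := hle k y hyk j
      linarith [hydom j]
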